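/- For λ ∈ (1/3, 1/2), the set E_λ = C_λ − C_λ equals the full interval [-1, 1], where C_λ = {(1-λ)·∑_{n≥1} i_n·λ^{n-1} : i_n ∈ {0,1}}. -/

import Mathlib

open scoped Pointwise

/-- `PiFun i λ = (1-λ) ∑_{n≥0} i_n λ^n`, the series Π from the paper (0-based indexing). -/
noncomputable def PiFun (i : ℕ → ℝ) (l : ℝ) : ℝ := (1 - l) * ∑' n : ℕ, i n * l ^ n

/-- `i` is a sequence over the alphabet `{-1,0,1}`. -/
def IsCoding (i : ℕ → ℝ) : Prop := ∀ n, i n = -1 ∨ i n = 0 ∨ i n = 1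

/-- Strict lexicographic order on sequences. -/
def LexLt (i j : ℕ → ℝ) : Prop := ∃ m, (∀ n, n < m → i n = j n) ∧ i m < j m

/-- Non-strict lexicographic order on sequences. -/
def LexLe (i j : ℕ → ℝ) : Prop := LexLt i j ∨ i = j

-- `rho i j = 3^{-k}` where `k` is the first (0-based) index at which the sequences differ
-- (this equals `3^{1-k}` for 1-based indexing as in the paper).
open Classical in
noncomputable def rho (i j : ℕ → ℝ) : ℝ :=
  if i = j then 0 else (3 : ℝ) ^ (-((sInf {n : ℕ | i n ≠ j n} : ℕ) : ℤ))

/-- The middle-`(1-2λ)` Cantor set `C_λ`. -/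
def Cset (l : ℝ) : Set ℝ :=
  {x | ∃ i : ℕ → ℝ, (∀ n, i n = 0 ∨ i n = 1) ∧ x = (1 - l) * ∑' n : ℕ, i n * l ^ n}

/-- `Λ(t) = {λ ∈ (0,1/3] : t ∈ C_λ - C_λ}`. -/
def Lam (t : ℝ) : Set ℝ := {l | l ∈ Set.Ioc (0 : ℝ) (1/3) ∧ t ∈ Cset l - Cset l}

noncomputable def dig (l t : ℝ) : ℝ := if t < -l then -1 else if t ≤ l then 0 else 1

noncomputable def Tseq (l t : ℝ) : ℕ → ℝ
  | 0 => t
  | (n+1) => (Tseq l t n - (1 - l) * dig l (Tseq l t n)) / l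

lemma dig_mem (l t : ℝ) : dig l t = -1 ∨ dig l t = 0 ∨ dig l t = 1 := by
  unfold dig; split_ifs <;> tauto

lemma step_bound {l s : ℝ} (hl1 : 1/3 < l) (hl2 : l < 1/2) (hs : |s| ≤ 1) :
    |(s - (1 - l) * dig l s) / l| ≤ 1 := by
  rw [abs_le] at hs ⊢
  have hlpos : (0:ℝ) < l := by linarith
  rw [div_le_one hlpos, le_div_iff₀ hlpos]
  unfold dig
  split_ifs with h1 h2 <;> constructor <;> nlinarith

lemma Tseq_bound {l t : ℝ} (hl1 : 1/3 < l) (hl2 : l < 1/2) (ht : |t| ≤ 1) (n : ℕ) :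
    |Tseq l t n| ≤ 1 := by
  induction n with
  | zero => exact ht
  | succ n ih => exact step_bound hl1 hl2 ih

lemma Tseq_sum {l t : ℝ} (hl : l ≠ 0) (N : ℕ) :
    t = (1 - l) * ∑ k ∈ Finset.range N, dig l (Tseq l t k) * l ^ k + l ^ N * Tseq l t N := by
  induction N with
  | zero => simp [Tseq]
  | succ N ih =>
      have h : Tseq l t (N+1) = (Tseq l t N - (1 - l) * dig l (Tseq l t N)) / l := rfl
      have key : l ^ (N+1) * Tseq l t (N+1) = l ^ N * (Tseq l t N - (1 - l) * dig l (Tseq l t N)) := by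
        rw [h, pow_succ]
        field_simp
      rw [Finset.sum_range_succ, key]
      conv_lhs => rw [ih]
      ring

lemma summable_digits {l : ℝ} (hl0 : 0 ≤ l) (hl1 : l < 1) {i : ℕ → ℝ}
    (hb : ∀ n, |i n| ≤ 1) : Summable (fun n => i n * l ^ n) := by
  apply Summable.of_norm_bounded (summable_geometric_of_lt_one hl0 hl1)
  intro n
  rw [norm_mul, norm_pow, Real.norm_eq_abs, Real.norm_eq_abs, abs_of_nonneg hl0]
  calc |i n| * l ^ n ≤ 1 * l ^ n :=
        mul_le_mul_of_nonneg_right (hb n) (pow_nonneg hl0 n)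
    _ = l ^ n := one_mul _

lemma repr_of_mem_Icc {l t : ℝ} (hl1 : 1/3 < l) (hl2 : l < 1/2) (ht : t ∈ Set.Icc (-1:ℝ) 1) :
    ∃ i : ℕ → ℝ, (∀ n, i n = -1 ∨ i n = 0 ∨ i n = 1) ∧ t = (1 - l) * ∑' n, i n * l ^ n := by
  have hl0 : (0:ℝ) < l := by linarith
  have hl1' : l < 1 := by linarith
  set i : ℕ → ℝ := fun n => dig l (Tseq l t n) with hi
  have habs : |t| ≤ 1 := abs_le.mpr ⟨ht.1, ht.2⟩
  have hb : ∀ n, |i n| ≤ 1 := by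
    intro n; rcases dig_mem l (Tseq l t n) with h | h | h <;> simp [hi, h]
  have hsum : Summable (fun n => i n * l ^ n) := summable_digits hl0.le hl1' hb
  refine ⟨i, fun n => dig_mem l (Tseq l t n), ?_⟩
  have hten : Filter.Tendsto (fun N => (1 - l) * ∑ k ∈ Finset.range N, i k * l ^ k)
      Filter.atTop (nhds t) := by
    rw [tendsto_iff_dist_tendsto_zero]
    apply squeeze_zero (fun N => dist_nonneg) (g := fun N => l ^ N)
    · intro N
      have hid := Tseq_sum (t := t) hl0.ne' N
      rw [Real.dist_eq, abs_sub_comm]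
      have heq : t - (1 - l) * ∑ k ∈ Finset.range N, i k * l ^ k = l ^ N * Tseq l t N := by
        linarith [hid]
      rw [heq, abs_mul, abs_pow, abs_of_nonneg hl0.le]
      calc l ^ N * |Tseq l t N| ≤ l ^ N * 1 :=
            mul_le_mul_of_nonneg_left (Tseq_bound hl1 hl2 habs N) (pow_nonneg hl0.le N)
        _ = l ^ N := mul_one _
    · exact tendsto_pow_atTop_nhds_zero_of_lt_one hl0.le hl1'
  have hten2 : Filter.Tendsto (fun N => (1 - l) * ∑ k ∈ Finset.range N, i k * l ^ k)
      Filter.atTop (nhds ((1 - l) * ∑' n, i n * l ^ n)) :=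
    (hsum.hasSum.tendsto_sum_nat).const_mul _
  exact tendsto_nhds_unique hten hten2

theorem stmt9 (l : ℝ) (hl : l ∈ Set.Ioo (1/3 : ℝ) (1/2)) :
    Cset l - Cset l = Set.Icc (-1 : ℝ) 1 := by
  obtain ⟨hl1, hl2⟩ := hl
  have hl0 : (0:ℝ) < l := by linarith
  have hl1' : l < 1 := by linarith
  ext t
  constructor
  · rintro ⟨x, ⟨a, ha, rfl⟩, y, ⟨b, hb, rfl⟩, rfl⟩
    have hba : ∀ n, |a n| ≤ 1 := fun n => by rcases ha n with h | h <;> simp [h]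
    have hbb : ∀ n, |b n| ≤ 1 := fun n => by rcases hb n with h | h <;> simp [h]
    have hsa := summable_digits hl0.le hl1' hba
    have hsb := summable_digits hl0.le hl1' hbb
    have key : (1 - l) * (∑' n, a n * l ^ n) - (1 - l) * (∑' n, b n * l ^ n)
        = (1 - l) * ∑' n, (a n - b n) * l ^ n := by
      rw [← mul_sub, ← Summable.tsum_sub hsa hsb]
      congr 1
      exact tsum_congr fun n => by ring
    have hbc : ∀ n, |a n - b n| ≤ 1 := by
      intro n; rcases ha n with h | h <;> rcases hb n with h' | h' <;> norm_num [h, h']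
    have hsc := summable_digits hl0.le hl1' hbc
    have hnorm : |(1 - l) * ∑' n, (a n - b n) * l ^ n| ≤ 1 := by
      rw [abs_mul, abs_of_nonneg (by linarith : (0:ℝ) ≤ 1 - l)]
      have h1 : |∑' n, (a n - b n) * l ^ n| ≤ ∑' n : ℕ, l ^ n := by
        refine (norm_tsum_le_tsum_norm hsc.norm).trans ?_
        apply Summable.tsum_le_tsum _ hsc.norm (summable_geometric_of_lt_one hl0.le hl1')
        intro n
        rw [Real.norm_eq_abs, abs_mul, abs_pow, abs_of_nonneg hl0.le]
        calc |a n - b n| * l ^ n ≤ 1 * l ^ n :=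
              mul_le_mul_of_nonneg_right (hbc n) (pow_nonneg hl0.le n)
          _ = l ^ n := one_mul _
      have h2 : (∑' n : ℕ, l ^ n) = (1 - l)⁻¹ := tsum_geometric_of_lt_one hl0.le hl1'
      calc (1 - l) * |∑' n, (a n - b n) * l ^ n| ≤ (1 - l) * (1 - l)⁻¹ := by
            apply mul_le_mul_of_nonneg_left _ (by linarith)
            rw [← h2]; exact h1
        _ = 1 := mul_inv_cancel₀ (by linarith)
    show (1 - l) * (∑' n, a n * l ^ n) - (1 - l) * (∑' n, b n * l ^ n) ∈ Set.Icc (-1:ℝ) 1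
    rw [key]
    exact Set.mem_Icc.mpr (abs_le.mp hnorm)
  · intro ht
    obtain ⟨i, hi, hrep⟩ := repr_of_mem_Icc hl1 hl2 ht
    set a : ℕ → ℝ := fun n => if i n = 1 then 1 else 0 with ha
    set b : ℕ → ℝ := fun n => if i n = -1 then 1 else 0 with hb
    have hab : ∀ n, a n - b n = i n := by
      intro n; rcases hi n with h | h | h <;> norm_num [ha, hb, h]
    have ha01 : ∀ n, a n = 0 ∨ a n = 1 := by
      intro n; by_cases h : i n = 1 <;> simp [ha, h]
    have hb01 : ∀ n, b n = 0 ∨ b n = 1 := by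
      intro n; by_cases h : i n = -1 <;> simp [hb, h]
    have hba : ∀ n, |a n| ≤ 1 := fun n => by rcases ha01 n with h | h <;> simp [h]
    have hbb : ∀ n, |b n| ≤ 1 := fun n => by rcases hb01 n with h | h <;> simp [h]
    have hsa := summable_digits hl0.le hl1' hba
    have hsb := summable_digits hl0.le hl1' hbb
    refine ⟨(1 - l) * ∑' n, a n * l ^ n, ⟨a, ha01, rfl⟩,
      (1 - l) * ∑' n, b n * l ^ n, ⟨b, hb01, rfl⟩, ?_⟩
    show (1 - l) * (∑' n, a n * l ^ n) - (1 - l) * (∑' n, b n * l ^ n) = t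
    rw [← mul_sub, ← Summable.tsum_sub hsa hsb, hrep]
    congr 1
    exact tsum_congr fun n => by rw [← hab n]; ring
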